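/- Let m ≥ 1 be an integer and V a k-subspace of k[β] with (β^m) ⊆ V, and set d = dim_k V/(β^m). If d ≤ 2 ≤ m, or if d > 2 and (d − 2)(d + 2 − m) + 2 > 0, then W(V,m) ≠ 0, i.e. there exists a nonzero pair (A,B) ∈ W(V,m). -/

import Mathlib

open Polynomial Matrix

noncomputable section

/-- `Algebra` structure on the quotient of a `k`-algebra by a ring congruence. -/
instance RingConQuotient.algebra (k R : Type*) [CommSemiring k] [Ring R] [Algebra k R]
    (c : RingCon R) : Algebra k c.Quotient where
  algebraMap := (RingCon.mk' c).comp (algebraMap k R)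
  commutes' := by
    intro r x
    induction x using Quotient.ind
    exact congrArg _ (Algebra.commutes r _)
  smul_def' := by
    intro r x
    induction x using Quotient.ind
    exact congrArg _ (Algebra.smul_def r _)

variable (k : Type*) [Field k]

/-- `D` is a `k`-derivation (as a linear endomorphism of a `k`-algebra). -/
def IsDer {R : Type*} [Ring R] [Algebra k R] (D : R →ₗ[k] R) : Prop :=
  ∀ x y : R, D (x * y) = D x * y + x * D y

/-- `D` is an inner derivation. -/
def IsInner {R : Type*} [Ring R] [Algebra k R] (D : R →ₗ[k] R) : Prop :=
  ∃ a : R, ∀ x : R, D x = a * x - x * a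

/-- The ideal `(β^j)` of `k[β]`, as a `k`-submodule. -/
def Bsub (j : ℕ) : Submodule k (Polynomial k) where
  carrier := {p | X ^ j ∣ p}
  zero_mem' := dvd_zero _
  add_mem' := fun h1 h2 => dvd_add h1 h2
  smul_mem' := fun c p hp => by
    simpa [Polynomial.smul_eq_C_mul] using Dvd.dvd.mul_left hp (C c)

lemma mem_Bsub {k : Type*} [Field k] {j : ℕ} {p : Polynomial k} :
    p ∈ Bsub k j ↔ X ^ j ∣ p := Iff.rfl

/-- The algebra `T`: upper triangular 3×3 matrices over `k[β]` whose
`(1,1)` and `(3,3)` entries are constants. -/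
def Tsub : Subalgebra k (Matrix (Fin 3) (Fin 3) (Polynomial k)) where
  carrier := {M | (∀ i j : Fin 3, j < i → M i j = 0) ∧
      (∃ x : k, M 0 0 = C x) ∧ (∃ z : k, M 2 2 = C z)}
  zero_mem' := ⟨fun _ _ _ => rfl, ⟨0, by simp⟩, ⟨0, by simp⟩⟩
  one_mem' := ⟨fun i j h => Matrix.one_apply_ne h.ne', ⟨1, by simp⟩, ⟨1, by simp⟩⟩
  add_mem' := by
    rintro a b ⟨hal, ⟨x, hax⟩, ⟨z, haz⟩⟩ ⟨hbl, ⟨y, hby⟩, ⟨w, hbw⟩⟩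
    refine ⟨fun i j h => by simp [hal i j h, hbl i j h], ⟨x + y, by simp [hax, hby]⟩,
      ⟨z + w, by simp [haz, hbw]⟩⟩
  mul_mem' := by
    rintro a b ⟨hal, ⟨x, hax⟩, ⟨z, haz⟩⟩ ⟨hbl, ⟨y, hby⟩, ⟨w, hbw⟩⟩
    refine ⟨fun i j h => ?_, ⟨x * y, ?_⟩, ⟨z * w, ?_⟩⟩
    · rw [Matrix.mul_apply]
      apply Finset.sum_eq_zero
      intro l _
      rcases lt_or_ge l i with hl | hl
      · rw [hal i l hl, zero_mul]
      · rw [hbl l j (lt_of_lt_of_le h hl), mul_zero]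
    · rw [Matrix.mul_apply, Fin.sum_univ_three,
        hbl 1 0 (by decide), hbl 2 0 (by decide), hax, hby]
      simp
    · rw [Matrix.mul_apply, Fin.sum_univ_three,
        hal 2 0 (by decide), hal 2 1 (by decide), haz, hbw]
      simp
  algebraMap_mem' := by
    intro r
    refine ⟨fun i j h => ?_, ⟨r, ?_⟩, ⟨r, ?_⟩⟩
    · rw [Matrix.algebraMap_matrix_apply, if_neg h.ne']
    · rw [Matrix.algebraMap_matrix_apply, if_pos rfl]; rfl
    · rw [Matrix.algebraMap_matrix_apply, if_pos rfl]; rfl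

/-- The matrix `p·E₁₂` as an element of `T`. -/
def tE12 (p : Polynomial k) : Tsub k :=
  ⟨Matrix.single 0 1 p, by
    refine ⟨fun i j h => ?_, ⟨0, ?_⟩, ⟨0, ?_⟩⟩
    · fin_cases i <;> fin_cases j <;> simp_all [Matrix.single, Matrix.of_apply]
    · simp [Matrix.single, Matrix.of_apply]
    · simp [Matrix.single, Matrix.of_apply]⟩

/-- The matrix `p·E₂₂` as an element of `T`. -/
def tE22 (p : Polynomial k) : Tsub k :=
  ⟨Matrix.single 1 1 p, by
    refine ⟨fun i j h => ?_, ⟨0, ?_⟩, ⟨0, ?_⟩⟩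
    · fin_cases i <;> fin_cases j <;> simp_all [Matrix.single, Matrix.of_apply]
    · simp [Matrix.single, Matrix.of_apply]
    · simp [Matrix.single, Matrix.of_apply]⟩

/-- The matrix `p·E₂₃` as an element of `T`. -/
def tE23 (p : Polynomial k) : Tsub k :=
  ⟨Matrix.single 1 2 p, by
    refine ⟨fun i j h => ?_, ⟨0, ?_⟩, ⟨0, ?_⟩⟩
    · fin_cases i <;> fin_cases j <;> simp_all [Matrix.single, Matrix.of_apply]
    · simp [Matrix.single, Matrix.of_apply]
    · simp [Matrix.single, Matrix.of_apply]⟩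

/-- The matrix `p·E₁₃` as an element of `T`. -/
def tE13 (p : Polynomial k) : Tsub k :=
  ⟨Matrix.single 0 2 p, by
    refine ⟨fun i j h => ?_, ⟨0, ?_⟩, ⟨0, ?_⟩⟩
    · fin_cases i <;> fin_cases j <;> simp_all [Matrix.single, Matrix.of_apply]
    · simp [Matrix.single, Matrix.of_apply]
    · simp [Matrix.single, Matrix.of_apply]⟩

/-- The idempotent `E₁₁` as an element of `T`. -/
def tE11 : Tsub k :=
  ⟨Matrix.single 0 0 1, by
    refine ⟨fun i j h => ?_, ⟨1, ?_⟩, ⟨0, ?_⟩⟩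
    · fin_cases i <;> fin_cases j <;> simp_all [Matrix.single, Matrix.of_apply]
    · simp [Matrix.single, Matrix.of_apply]
    · simp [Matrix.single, Matrix.of_apply]⟩

/-- The idempotent `E₂₂` as an element of `T`. -/
def tE22one : Tsub k := tE22 k 1

/-- The idempotent `E₃₃` as an element of `T`. -/
def tE33 : Tsub k :=
  ⟨Matrix.single 2 2 1, by
    refine ⟨fun i j h => ?_, ⟨0, ?_⟩, ⟨1, ?_⟩⟩
    · fin_cases i <;> fin_cases j <;> simp_all [Matrix.single, Matrix.of_apply]
    · simp [Matrix.single, Matrix.of_apply]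
    · simp [Matrix.single, Matrix.of_apply]⟩

/-- The underlying set of the ideal `I(n; n', n''; V)` of `T`. -/
def Icar (n n' n'' : ℕ) (V : Submodule k (Polynomial k)) : Set (Tsub k) :=
  {M | (M : Matrix (Fin 3) (Fin 3) (Polynomial k)) 0 0 = 0 ∧
       (M : Matrix (Fin 3) (Fin 3) (Polynomial k)) 2 2 = 0 ∧
       X ^ n' ∣ (M : Matrix (Fin 3) (Fin 3) (Polynomial k)) 0 1 ∧
       (M : Matrix (Fin 3) (Fin 3) (Polynomial k)) 0 2 ∈ V ∧
       X ^ n ∣ (M : Matrix (Fin 3) (Fin 3) (Polynomial k)) 1 1 ∧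
       X ^ n'' ∣ (M : Matrix (Fin 3) (Fin 3) (Polynomial k)) 1 2}

variable {k}

lemma Tsub_lower {a : Tsub k} :
    ∀ i j : Fin 3, j < i → (a : Matrix (Fin 3) (Fin 3) (Polynomial k)) i j = 0 := a.2.1

lemma Tsub_00 (a : Tsub k) : ∃ x : k, (a : Matrix (Fin 3) (Fin 3) (Polynomial k)) 0 0 = C x :=
  a.2.2.1

lemma Tsub_22 (a : Tsub k) : ∃ z : k, (a : Matrix (Fin 3) (Fin 3) (Polynomial k)) 2 2 = C z :=
  a.2.2.2

variable (k)

/-- The two-sided ideal `I(n; n', n''; V)` of `T`. -/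
def Itsi (n n' n'' : ℕ) (V : Submodule k (Polynomial k)) (hn' : n' ≤ n) (hn'' : n'' ≤ n)
    (hV : ∀ p : Polynomial k, X ^ min n' n'' ∣ p → p ∈ V) : TwoSidedIdeal (Tsub k) :=
  TwoSidedIdeal.mk' (Icar k n n' n'' V)
    (by
      refine ⟨rfl, rfl, ?_, ?_, ?_, ?_⟩ <;> simp)
    (by
      rintro a b ⟨h1, h2, h3, h4, h5, h6⟩ ⟨g1, g2, g3, g4, g5, g6⟩
      refine ⟨?_, ?_, ?_, ?_, ?_, ?_⟩ <;>
        simp only [AddMemClass.coe_add, Matrix.add_apply]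
      · rw [h1, g1, add_zero]
      · rw [h2, g2, add_zero]
      · exact dvd_add h3 g3
      · exact V.add_mem h4 g4
      · exact dvd_add h5 g5
      · exact dvd_add h6 g6)
    (by
      rintro a ⟨h1, h2, h3, h4, h5, h6⟩
      refine ⟨?_, ?_, ?_, ?_, ?_, ?_⟩ <;>
        simp only [NegMemClass.coe_neg, Matrix.neg_apply]
      · rw [h1, neg_zero]
      · rw [h2, neg_zero]
      · exact dvd_neg.mpr h3
      · exact V.neg_mem h4
      · exact dvd_neg.mpr h5
      · exact dvd_neg.mpr h6)
    (by
      rintro t a ⟨h1, h2, h3, h4, h5, h6⟩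
      have hta : ((t * a : Tsub k) : Matrix (Fin 3) (Fin 3) (Polynomial k)) =
          (t : Matrix (Fin 3) (Fin 3) (Polynomial k)) * a := rfl
      obtain ⟨x, hx⟩ := Tsub_00 t
      refine ⟨?_, ?_, ?_, ?_, ?_, ?_⟩ <;>
        rw [hta, Matrix.mul_apply, Fin.sum_univ_three]
      · rw [h1, Tsub_lower (a := a) 1 0 (by decide), Tsub_lower (a := a) 2 0 (by decide)]
        simp
      · rw [h2, Tsub_lower (a := t) 2 0 (by decide), Tsub_lower (a := t) 2 1 (by decide)]
        simp
      · rw [Tsub_lower (a := a) 2 1 (by decide)]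
        simp only [mul_zero, add_zero]
        exact dvd_add (Dvd.dvd.mul_left h3 _)
          (Dvd.dvd.mul_left ((pow_dvd_pow X hn').trans h5) _)
      · rw [h2]
        simp only [mul_zero, add_zero]
        refine V.add_mem ?_
          (hV _ (Dvd.dvd.mul_left ((pow_dvd_pow X (min_le_right n' n'')).trans h6) _))
        rw [hx]
        have : C x * (a : Matrix (Fin 3) (Fin 3) (Polynomial k)) 0 2 =
            x • (a : Matrix (Fin 3) (Fin 3) (Polynomial k)) 0 2 := by
          rw [Polynomial.smul_eq_C_mul]
        rw [this]
        exact V.smul_mem _ h4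
      · rw [Tsub_lower (a := t) 1 0 (by decide), Tsub_lower (a := a) 2 1 (by decide)]
        simp only [zero_mul, mul_zero, zero_add, add_zero]
        exact Dvd.dvd.mul_left h5 _
      · rw [Tsub_lower (a := t) 1 0 (by decide), h2]
        simp only [zero_mul, mul_zero, zero_add, add_zero]
        exact Dvd.dvd.mul_left h6 _)
    (by
      rintro a t ⟨h1, h2, h3, h4, h5, h6⟩
      have hta : ((a * t : Tsub k) : Matrix (Fin 3) (Fin 3) (Polynomial k)) =
          (a : Matrix (Fin 3) (Fin 3) (Polynomial k)) * t := rfl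
      obtain ⟨z, hz⟩ := Tsub_22 t
      refine ⟨?_, ?_, ?_, ?_, ?_, ?_⟩ <;>
        rw [hta, Matrix.mul_apply, Fin.sum_univ_three]
      · rw [h1, Tsub_lower (a := t) 1 0 (by decide), Tsub_lower (a := t) 2 0 (by decide)]
        simp
      · rw [h2, Tsub_lower (a := a) 2 0 (by decide), Tsub_lower (a := a) 2 1 (by decide)]
        simp
      · rw [h1, Tsub_lower (a := t) 2 1 (by decide)]
        simp only [zero_mul, mul_zero, zero_add, add_zero]
        exact Dvd.dvd.mul_right h3 _
      · rw [h1]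
        simp only [zero_mul, zero_add]
        refine V.add_mem
          (hV _ (Dvd.dvd.mul_right ((pow_dvd_pow X (min_le_left n' n'')).trans h3) _)) ?_
        rw [hz]
        have : (a : Matrix (Fin 3) (Fin 3) (Polynomial k)) 0 2 * C z =
            z • (a : Matrix (Fin 3) (Fin 3) (Polynomial k)) 0 2 := by
          rw [Polynomial.smul_eq_C_mul, mul_comm]
        rw [this]
        exact V.smul_mem _ h4
      · rw [Tsub_lower (a := a) 1 0 (by decide), Tsub_lower (a := t) 2 1 (by decide)]
        simp only [zero_mul, mul_zero, zero_add, add_zero]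
        exact Dvd.dvd.mul_right h5 _
      · rw [Tsub_lower (a := a) 1 0 (by decide)]
        simp only [zero_mul, zero_add]
        exact dvd_add (Dvd.dvd.mul_right ((pow_dvd_pow X hn'').trans h5) _)
          (Dvd.dvd.mul_right h6 _))

/-- The quotient algebra `A = T / I(n; n', n''; V)`. -/
def Aquot (n n' n'' : ℕ) (V : Submodule k (Polynomial k)) (hn' : n' ≤ n) (hn'' : n'' ≤ n)
    (hV : ∀ p : Polynomial k, X ^ min n' n'' ∣ p → p ∈ V) : Type _ :=
  (Itsi k n n' n'' V hn' hn'' hV).ringCon.Quotient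

instance (n n' n'' : ℕ) (V : Submodule k (Polynomial k)) (hn' : n' ≤ n) (hn'' : n'' ≤ n)
    (hV : ∀ p : Polynomial k, X ^ min n' n'' ∣ p → p ∈ V) :
    Ring (Aquot k n n' n'' V hn' hn'' hV) :=
  inferInstanceAs (Ring (Itsi k n n' n'' V hn' hn'' hV).ringCon.Quotient)

instance (n n' n'' : ℕ) (V : Submodule k (Polynomial k)) (hn' : n' ≤ n) (hn'' : n'' ≤ n)
    (hV : ∀ p : Polynomial k, X ^ min n' n'' ∣ p → p ∈ V) :
    Algebra k (Aquot k n n' n'' V hn' hn'' hV) :=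
  inferInstanceAs (Algebra k (Itsi k n n' n'' V hn' hn'' hV).ringCon.Quotient)

/-- The quotient map `T → A`. -/
def Amk (n n' n'' : ℕ) (V : Submodule k (Polynomial k)) (hn' : n' ≤ n) (hn'' : n'' ≤ n)
    (hV : ∀ p : Polynomial k, X ^ min n' n'' ∣ p → p ∈ V) :
    Tsub k →+* Aquot k n n' n'' V hn' hn'' hV :=
  RingCon.mk' (Itsi k n n' n'' V hn' hn'' hV).ringCon


/-- The space `W(V,m)` of first-order differential operators `A + B·∂/∂β` with
`A(0) = B(0) = 0`, `deg A, deg B ≤ m − 1`, mapping `V` into itself. -/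
def Wsub (m : ℕ) (V : Submodule k (Polynomial k)) :
    Submodule k (Polynomial k × Polynomial k) where
  carrier := {P | P.1.coeff 0 = 0 ∧ P.2.coeff 0 = 0 ∧
      P.1.degree ≤ ((m - 1 : ℕ) : WithBot ℕ) ∧ P.2.degree ≤ ((m - 1 : ℕ) : WithBot ℕ) ∧
      ∀ v ∈ V, P.1 * v + P.2 * derivative v ∈ V}
  zero_mem' := by
    refine ⟨by simp, by simp, by simp, by simp, fun v hv => by simpa using V.zero_mem⟩
  add_mem' := by
    rintro P Q ⟨h1, h2, h3, h4, h5⟩ ⟨g1, g2, g3, g4, g5⟩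
    refine ⟨by simp [h1, g1], by simp [h2, g2],
      le_trans (Polynomial.degree_add_le _ _) (max_le h3 g3),
      le_trans (Polynomial.degree_add_le _ _) (max_le h4 g4), fun v hv => ?_⟩
    have : (P + Q).1 * v + (P + Q).2 * derivative v =
        (P.1 * v + P.2 * derivative v) + (Q.1 * v + Q.2 * derivative v) := by
      simp [add_mul]; ring
    rw [this]
    exact V.add_mem (h5 v hv) (g5 v hv)
  smul_mem' := by
    rintro c P ⟨h1, h2, h3, h4, h5⟩
    refine ⟨by simp [h1], by simp [h2],
      le_trans (Polynomial.degree_smul_le _ _) h3,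
      le_trans (Polynomial.degree_smul_le _ _) h4, fun v hv => ?_⟩
    have : (c • P).1 * v + (c • P).2 * derivative v =
        c • (P.1 * v + P.2 * derivative v) := by
      simp [smul_add, smul_mul_assoc]
    rw [this]
    exact V.smul_mem _ (h5 v hv)


/-- The linear operator `v ↦ Xq·v + Xr·v'` on `k[β]`. -/
def gLin {K : Type*} [Field K] (q r : Polynomial K) : Polynomial K →ₗ[K] Polynomial K where
  toFun v := X * q * v + X * r * derivative v
  map_add' v w := by simp only [derivative_add]; ring
  map_smul' c v := by
    simp only [derivative_smul, RingHom.id_apply]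
    simp only [Polynomial.smul_eq_C_mul]; ring

lemma gLin_apply {K : Type*} [Field K] (q r v : Polynomial K) :
    gLin q r v = X * q * v + X * r * derivative v := rfl

lemma gLin_add {K : Type*} [Field K] (q q' r r' v : Polynomial K) :
    gLin (q + q') (r + r') v = gLin q r v + gLin q' r' v := by
  simp only [gLin_apply]; ring

lemma gLin_smul {K : Type*} [Field K] (c : K) (q r v : Polynomial K) :
    gLin (c • q) (c • r) v = c • gLin q r v := by
  simp only [gLin_apply, Polynomial.smul_eq_C_mul]; ring

lemma gLin_mem_Bsub {K : Type*} [Field K] {m : ℕ} (hm : 1 ≤ m) (q r p : Polynomial K)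
    (hp : X ^ m ∣ p) : gLin q r p ∈ Bsub K m := by
  obtain ⟨t, rfl⟩ := hp
  rw [mem_Bsub]
  have hx : (X : Polynomial K) * X ^ (m - 1) = X ^ m := by
    rw [← pow_succ']; congr 1; omega
  have key : gLin q r (X ^ m * t) = X ^ m * (X * q * t) +
      (X * X ^ (m - 1)) * (C (m : K) * r * t) + X ^ m * (X * r * derivative t) := by
    rw [gLin_apply, derivative_mul, derivative_X_pow]; ring
  rw [key, hx]
  exact dvd_add (dvd_add (dvd_mul_right _ _) (dvd_mul_right _ _)) (dvd_mul_right _ _)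

set_option maxHeartbeats 1000000 in
set_option synthInstance.maxHeartbeats 200000 in
/-- if `d ≤ 2 ≤ m`, or `d > 2` and `(d−2)(d+2−m) + 2 > 0`,
then `W(V,m) ≠ 0`. -/
theorem stmt11 (m : ℕ) (hm : 1 ≤ m) (V : Submodule k (Polynomial k))
    (hV : ∀ p : Polynomial k, X ^ m ∣ p → p ∈ V)
    (d : ℕ) (hd : d = Module.finrank k
      (↥V ⧸ (Submodule.comap V.subtype (Bsub k m))))
    (hcase : (d ≤ 2 ∧ 2 ≤ m) ∨
      (2 < d ∧ 0 < ((d : ℤ) - 2) * ((d : ℤ) + 2 - m) + 2)) :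
    ∃ P ∈ Wsub k m V, P ≠ 0 := by
  classical
  set W : Submodule k (Polynomial k) := Bsub k m with hWdef
  set Vb : Submodule k (Polynomial k ⧸ W) := V.map W.mkQ with hVbdef
  have hmonic : (X ^ m : Polynomial k).Monic := monic_X_pow m
  -- finrank of degreeLT spaces
  have finLT : ∀ n : ℕ, FiniteDimensional k (Polynomial.degreeLT k n) := fun n =>
    (Polynomial.degreeLTEquiv k n).symm.finiteDimensional
  have hfrLT : ∀ n : ℕ, Module.finrank k (Polynomial.degreeLT k n) = n := fun n => by
    rw [(Polynomial.degreeLTEquiv k n).finrank_eq, Module.finrank_fin_fun]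
  haveI := finLT m
  haveI := finLT (m - 1)
  -- the quotient Q := k[X]/(X^m) has dimension m
  let f : Polynomial.degreeLT k m →ₗ[k] (Polynomial k ⧸ W) :=
    W.mkQ ∘ₗ (Polynomial.degreeLT k m).subtype
  have hfinj : Function.Injective f := by
    rw [← LinearMap.ker_eq_bot, Submodule.eq_bot_iff]
    rintro ⟨p, hp⟩ hker
    have h0 : p ∈ W := (Submodule.Quotient.mk_eq_zero W).mp hker
    have hz : p = 0 := Polynomial.eq_zero_of_dvd_of_degree_lt h0
      (by rw [Polynomial.degree_X_pow]; exact Polynomial.mem_degreeLT.mp hp)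
    exact Subtype.ext hz
  have hfsurj : Function.Surjective f := by
    intro x
    obtain ⟨v, rfl⟩ := W.mkQ_surjective x
    refine ⟨⟨v %ₘ X ^ m, Polynomial.mem_degreeLT.mpr ?_⟩, ?_⟩
    · simpa [Polynomial.degree_X_pow] using Polynomial.degree_modByMonic_lt v hmonic
    · show W.mkQ (v %ₘ X ^ m) = W.mkQ v
      rw [Submodule.mkQ_apply, Submodule.mkQ_apply, Submodule.Quotient.eq]
      show (X : Polynomial k) ^ m ∣ _
      exact ⟨-(v /ₘ X ^ m), by linear_combination Polynomial.modByMonic_add_div v (X ^ m)⟩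
  let e : Polynomial.degreeLT k m ≃ₗ[k] (Polynomial k ⧸ W) :=
    LinearEquiv.ofBijective f ⟨hfinj, hfsurj⟩
  haveI : FiniteDimensional k (Polynomial k ⧸ W) := e.finiteDimensional
  have hQm : Module.finrank k (Polynomial k ⧸ W) = m := by rw [← e.finrank_eq, hfrLT]
  -- finrank Vb = d
  let g : V →ₗ[k] (Polynomial k ⧸ W) := W.mkQ ∘ₗ V.subtype
  have hker : LinearMap.ker g = Submodule.comap V.subtype W := by
    rw [LinearMap.ker_comp, Submodule.ker_mkQ]
  have hrange : LinearMap.range g = Vb := by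
    rw [LinearMap.range_comp, Submodule.range_subtype]
  have hdV : Module.finrank k Vb = d := by
    have e2 := g.quotKerEquivRange
    rw [hker, hrange] at e2
    rw [hd]
    exact e2.finrank_eq.symm
  -- the linear map Φ
  have hWle : ∀ q r : Polynomial k, q.coeff 0 = q.coeff 0 →
      W ≤ LinearMap.ker ((Vb.mkQ ∘ₗ W.mkQ) ∘ₗ gLin q r) := by
    intro q r _ p hp
    have h1 : gLin q r p ∈ W := gLin_mem_Bsub hm q r p hp
    simp only [LinearMap.mem_ker, LinearMap.comp_apply]
    rw [show W.mkQ (gLin q r p) = 0 from (Submodule.Quotient.mk_eq_zero W).mpr h1, map_zero]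
  let Φfun : (Polynomial.degreeLT k (m - 1) × Polynomial.degreeLT k (m - 1)) →
      (Vb →ₗ[k] ((Polynomial k ⧸ W) ⧸ Vb)) := fun P =>
    (W.liftQ ((Vb.mkQ ∘ₗ W.mkQ) ∘ₗ gLin (P.1 : Polynomial k) (P.2 : Polynomial k))
      (hWle _ _ rfl)) ∘ₗ Vb.subtype
  have Φfun_apply : ∀ P, ∀ v : Polynomial k, ∀ hv : W.mkQ v ∈ Vb,
      Φfun P ⟨W.mkQ v, hv⟩ =
        Vb.mkQ (W.mkQ (gLin (P.1 : Polynomial k) (P.2 : Polynomial k) v)) := by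
    intro P v hv
    simp [Φfun, Submodule.liftQ_apply]
  let Φ : (Polynomial.degreeLT k (m - 1) × Polynomial.degreeLT k (m - 1)) →ₗ[k]
      (Vb →ₗ[k] ((Polynomial k ⧸ W) ⧸ Vb)) :=
    { toFun := Φfun
      map_add' := by
        intro P P'
        apply LinearMap.ext
        rintro ⟨x, hx⟩
        obtain ⟨v, hv, rfl⟩ := Submodule.mem_map.mp hx
        have hvb : W.mkQ v ∈ Vb := Submodule.mem_map_of_mem hv
        rw [LinearMap.add_apply, Φfun_apply, Φfun_apply, Φfun_apply]
        have h1 : ((P + P').1 : Polynomial k) = (P.1 : Polynomial k) + (P'.1 : Polynomial k) :=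
          rfl
        have h2 : ((P + P').2 : Polynomial k) = (P.2 : Polynomial k) + (P'.2 : Polynomial k) :=
          rfl
        rw [h1, h2, gLin_add, map_add, map_add]
      map_smul' := by
        intro c P
        apply LinearMap.ext
        rintro ⟨x, hx⟩
        obtain ⟨v, hv, rfl⟩ := Submodule.mem_map.mp hx
        have hvb : W.mkQ v ∈ Vb := Submodule.mem_map_of_mem hv
        rw [RingHom.id_apply, LinearMap.smul_apply, Φfun_apply, Φfun_apply]
        have h1 : ((c • P).1 : Polynomial k) = c • (P.1 : Polynomial k) := rfl
        have h2 : ((c • P).2 : Polynomial k) = c • (P.2 : Polynomial k) := rfl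
        rw [h1, h2, gLin_smul, _root_.map_smul, _root_.map_smul] }
  haveI : FiniteDimensional k Vb := inferInstance
  haveI : FiniteDimensional k ((Polynomial k ⧸ W) ⧸ Vb) := inferInstance
  -- dimension count
  have hsum := Submodule.finrank_quotient_add_finrank Vb
  rw [hQm, hdV] at hsum
  have hlt : Module.finrank k (Vb →ₗ[k] ((Polynomial k ⧸ W) ⧸ Vb)) <
      Module.finrank k (Polynomial.degreeLT k (m - 1) × Polynomial.degreeLT k (m - 1)) := by
    rw [Module.finrank_linearMap, Module.finrank_prod, hfrLT, hdV]
    set e' := Module.finrank k ((Polynomial k ⧸ W) ⧸ Vb) with he'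
    rcases hcase with ⟨hd2, hm2⟩ | ⟨hd2, hineq⟩
    · interval_cases d <;> omega
    · have hdm : d ≤ m := by omega
      have he2 : (e' : ℤ) = (m : ℤ) - d := by
        have : e' + d = m := hsum
        omega
      have goal' : (d : ℤ) * e' < (m - 1 : ℕ) + (m - 1 : ℕ) := by
        rw [he2]
        have hcast : ((m - 1 : ℕ) : ℤ) = (m : ℤ) - 1 := by omega
        rw [hcast]
        nlinarith [hineq]
      exact_mod_cast goal'
  -- nonzero kernel element
  have hkerne : LinearMap.ker Φ ≠ ⊥ := by
    intro hbot
    have hinj : Function.Injective Φ := LinearMap.ker_eq_bot.mp hbot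
    exact absurd (LinearMap.finrank_le_finrank_of_injective hinj) (not_le.mpr hlt)
  obtain ⟨P, hPk, hP0⟩ := Submodule.exists_mem_ne_zero_of_ne_bot hkerne
  have hΦP : Φ P = 0 := LinearMap.mem_ker.mp hPk
  -- degree bound helper
  have hdeg : ∀ p : Polynomial k, p ∈ Polynomial.degreeLT k (m - 1) →
      (X * p).degree ≤ ((m - 1 : ℕ) : WithBot ℕ) := by
    intro p hp
    rcases eq_or_ne p 0 with rfl | hp0
    · simp
    rw [Polynomial.degree_mul, Polynomial.degree_X, Polynomial.degree_eq_natDegree hp0]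
    have hlt' : p.natDegree < m - 1 := by
      have := Polynomial.mem_degreeLT.mp hp
      rw [Polynomial.degree_eq_natDegree hp0] at this
      exact_mod_cast this
    have hcast : (1 : WithBot ℕ) + (p.natDegree : WithBot ℕ) =
        ((1 + p.natDegree : ℕ) : WithBot ℕ) := by push_cast; ring
    rw [hcast]
    exact_mod_cast (by omega : 1 + p.natDegree ≤ m - 1)
  refine ⟨(X * (P.1 : Polynomial k), X * (P.2 : Polynomial k)), ?_, ?_⟩
  · refine ⟨?_, ?_, hdeg _ P.1.2, hdeg _ P.2.2, ?_⟩
    · rw [Polynomial.mul_coeff_zero, Polynomial.coeff_X_zero, zero_mul]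
    · rw [Polynomial.mul_coeff_zero, Polynomial.coeff_X_zero, zero_mul]
    · intro v hv
      have hvb : W.mkQ v ∈ Vb := Submodule.mem_map_of_mem hv
      have h1 : Φfun P ⟨W.mkQ v, hvb⟩ = 0 := by
        show Φ P ⟨W.mkQ v, hvb⟩ = 0
        rw [hΦP]; rfl
      rw [Φfun_apply] at h1
      have h3 : W.mkQ (gLin (P.1 : Polynomial k) (P.2 : Polynomial k) v) ∈ Vb := by
        rwa [← Submodule.Quotient.mk_eq_zero Vb, ← Submodule.mkQ_apply]
      obtain ⟨w, hw, hww⟩ := Submodule.mem_map.mp h3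
      have h4 : gLin (P.1 : Polynomial k) (P.2 : Polynomial k) v - w ∈ W := by
        have := hww.symm
        rw [Submodule.mkQ_apply, Submodule.mkQ_apply, eq_comm, Submodule.Quotient.eq] at this
        have h4' := W.neg_mem this
        rwa [neg_sub] at h4'
      have h5 : gLin (P.1 : Polynomial k) (P.2 : Polynomial k) v ∈ V := by
        have heq : gLin (P.1 : Polynomial k) (P.2 : Polynomial k) v =
            (gLin (P.1 : Polynomial k) (P.2 : Polynomial k) v - w) + w := by ring
        rw [heq]
        exact V.add_mem (hV _ h4) hw
      simpa [gLin_apply, mul_assoc] using h5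
  · intro hcontra
    apply hP0
    have h1 : X * (P.1 : Polynomial k) = 0 := congrArg Prod.fst hcontra
    have h2 : X * (P.2 : Polynomial k) = 0 := congrArg Prod.snd hcontra
    have e1 : (P.1 : Polynomial k) = 0 :=
      (mul_eq_zero.mp h1).resolve_left Polynomial.X_ne_zero
    have e2 : (P.2 : Polynomial k) = 0 :=
      (mul_eq_zero.mp h2).resolve_left Polynomial.X_ne_zero
    exact Prod.ext (Subtype.ext e1) (Subtype.ext e2)

end
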